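/- Let f(x) = (1/2) xᵀ H x + ⟨b, x⟩ + c + g(x), where H is a symmetric d×d matrix, b ∈ ℝ^d, c ∈ ℝ, and g : ℝ^d → ℝ is differentiable and L_small-smooth. Then f satisfies the Functional (L_A, L_B) Inequality with L_A = 2√2 · L_small and L_B = √2 (‖H‖ + L_small): for all n ≥ 1, x, u₁, ..., uₙ, ‖(1/n) ∑ᵢ (∇f(x+uᵢ) - ∇f(x))‖² ≤ 8 L_small² (1/n) ∑ᵢ ‖uᵢ‖² + 2(‖H‖ + L_small)² ‖(1/n) ∑ᵢ uᵢ‖². -/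

import Mathlib

open scoped BigOperators RealInnerProductSpace

lemma stmt5_grad (d : ℕ) (A : EuclideanSpace ℝ (Fin d) →L[ℝ] EuclideanSpace ℝ (Fin d))
    (hA : ∀ x y : EuclideanSpace ℝ (Fin d), ⟪x, A y⟫ = ⟪A x, y⟫)
    (b : EuclideanSpace ℝ (Fin d)) (c : ℝ)
    (g : EuclideanSpace ℝ (Fin d) → ℝ) (hgdiff : Differentiable ℝ g)
    (f : EuclideanSpace ℝ (Fin d) → ℝ)
    (hf : ∀ x, f x = (1 / 2) * ⟪x, A x⟫ + ⟪b, x⟫ + c + g x) :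
    ∀ y, gradient f y = A y + b + gradient g y := by
  intro y
  have hq : HasFDerivAt (fun z : EuclideanSpace ℝ (Fin d) => ⟪z, A z⟫)
      ((fderivInnerCLM ℝ (y, A y)).comp ((ContinuousLinearMap.id ℝ _).prod A)) y :=
    (hasFDerivAt_id y).inner ℝ (A.hasFDerivAt)
  have hb : HasFDerivAt (fun z : EuclideanSpace ℝ (Fin d) => ⟪b, z⟫)
      (innerSL ℝ b) y := (innerSL ℝ b).hasFDerivAt
  have hg : HasFDerivAt g (InnerProductSpace.toDual ℝ _ (gradient g y)) y :=
    ((hgdiff y).hasGradientAt).hasFDerivAt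
  have hD := (((hq.const_smul (1/2 : ℝ)).add hb).add (hasFDerivAt_const c y)).add hg
  have hfeq : f = fun z => (1/2 : ℝ) • ⟪z, A z⟫ + ⟪b, z⟫ + c + g z := by
    funext z; rw [hf z]; simp [smul_eq_mul]
  rw [show (((((1 / 2 : ℝ) • fun z : EuclideanSpace ℝ (Fin d) => ⟪z, A z⟫) + fun z => ⟪b, z⟫) + fun _ => c) + g) = f from hfeq.symm] at hD
  have hgrad : HasGradientAt f (A y + b + gradient g y) y := by
    rw [hasGradientAt_iff_hasFDerivAt]
    refine hD.congr_fderiv ?_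
    apply ContinuousLinearMap.ext; intro h
    simp [fderivInnerCLM_apply, InnerProductSpace.toDual_apply_apply, real_inner_smul_left,
      inner_add_left, hA y h, real_inner_comm (A y) h]
    ring
  exact hgrad.gradient

set_option maxHeartbeats 1000000 in
theorem stmt5 (d : ℕ) (H : Matrix (Fin d) (Fin d) ℝ) (hH : H.IsSymm)
    (b : EuclideanSpace ℝ (Fin d)) (c : ℝ)
    (g : EuclideanSpace ℝ (Fin d) → ℝ) (Lsmall : ℝ) (hLs : 0 ≤ Lsmall)
    (hgdiff : Differentiable ℝ g)
    (hgsmooth : ∀ x y : EuclideanSpace ℝ (Fin d),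
      ‖gradient g x - gradient g y‖ ≤ Lsmall * ‖x - y‖)
    (f : EuclideanSpace ℝ (Fin d) → ℝ)
    (hf : ∀ x : EuclideanSpace ℝ (Fin d),
      f x = (1 / 2) * ⟪x, (Matrix.toEuclideanCLM (𝕜 := ℝ) H) x⟫ + ⟪b, x⟫ + c + g x) :
    ∀ (n : ℕ), 1 ≤ n → ∀ (x : EuclideanSpace ℝ (Fin d))
      (u : Fin n → EuclideanSpace ℝ (Fin d)),
      ‖(n : ℝ)⁻¹ • ∑ i, (gradient f (x + u i) - gradient f x)‖ ^ 2
        ≤ 8 * Lsmall ^ 2 * ((n : ℝ)⁻¹ * ∑ i, ‖u i‖ ^ 2)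
          + 2 * (‖(Matrix.toEuclideanCLM (𝕜 := ℝ) H :
              EuclideanSpace ℝ (Fin d) →L[ℝ] EuclideanSpace ℝ (Fin d))‖ + Lsmall) ^ 2
            * ‖(n : ℝ)⁻¹ • ∑ i, u i‖ ^ 2 := by
  set A : EuclideanSpace ℝ (Fin d) →L[ℝ] EuclideanSpace ℝ (Fin d) :=
    Matrix.toEuclideanCLM (𝕜 := ℝ) H with hA_def
  have hA : ∀ x y : EuclideanSpace ℝ (Fin d), ⟪x, A y⟫ = ⟪A x, y⟫ := by
    have h1 : H.IsHermitian := by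
      rwa [Matrix.IsHermitian, Matrix.conjTranspose_eq_transpose_of_trivial]
    have h2 := Matrix.isHermitian_iff_isSymmetric.mp h1
    have hcoe : ∀ z, (Matrix.toEuclideanCLM (𝕜 := ℝ) H) z = Matrix.toEuclideanLin H z :=
      fun z => by rw [← Matrix.coe_toEuclideanCLM_eq_toEuclideanLin]; rfl
    intro x y
    rw [hA_def, hcoe, hcoe, ← h2 x y]
  have hgrad := stmt5_grad d A hA b c g hgdiff f hf
  intro n hn x u
  have hnpos : (0 : ℝ) < (n : ℝ) := by exact_mod_cast Nat.pos_of_ne_zero (by omega)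
  -- rewrite the gradient differences
  have hdiff : ∀ i, gradient f (x + u i) - gradient f x
      = A (u i) + (gradient g (x + u i) - gradient g x) := by
    intro i
    rw [hgrad, hgrad, map_add]
    abel
  set m : EuclideanSpace ℝ (Fin d) := (n : ℝ)⁻¹ • ∑ i, u i with hm
  set v : EuclideanSpace ℝ (Fin d) :=
    (n : ℝ)⁻¹ • ∑ i, (gradient g (x + u i) - gradient g x) with hv
  have hLHS : (n : ℝ)⁻¹ • ∑ i, (gradient f (x + u i) - gradient f x) = A m + v := by
    rw [hm, hv, map_smul, map_sum, ← smul_add, ← Finset.sum_add_distrib]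
    congr 1
    exact Finset.sum_congr rfl fun i _ => hdiff i
  rw [hLHS]
  -- bound ‖v‖²
  have hvnorm : ‖v‖ ≤ Lsmall * ((n : ℝ)⁻¹ * ∑ i, ‖u i‖) := by
    rw [hv, norm_smul, norm_inv, Real.norm_natCast]
    calc (n : ℝ)⁻¹ * ‖∑ i, (gradient g (x + u i) - gradient g x)‖
        ≤ (n : ℝ)⁻¹ * ∑ i, ‖gradient g (x + u i) - gradient g x‖ := by
          gcongr; exact norm_sum_le _ _
      _ ≤ (n : ℝ)⁻¹ * ∑ i, Lsmall * ‖u i‖ := by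
          apply mul_le_mul_of_nonneg_left _ (inv_nonneg.mpr hnpos.le)
          apply Finset.sum_le_sum
          intro i _
          calc ‖gradient g (x + u i) - gradient g x‖
              ≤ Lsmall * ‖x + u i - x‖ := hgsmooth _ _
            _ = Lsmall * ‖u i‖ := by rw [add_sub_cancel_left]
      _ = Lsmall * ((n : ℝ)⁻¹ * ∑ i, ‖u i‖) := by
          rw [← Finset.mul_sum]; ring
  have hsumsq : ((n : ℝ)⁻¹ * ∑ i, ‖u i‖) ^ 2 ≤ (n : ℝ)⁻¹ * ∑ i, ‖u i‖ ^ 2 := by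
    have hcheb : (∑ i, ‖u i‖) ^ 2 ≤ (n : ℝ) * ∑ i, ‖u i‖ ^ 2 := by
      simpa using sq_sum_le_card_mul_sum_sq (s := (Finset.univ : Finset (Fin n)))
        (f := fun i => ‖u i‖)
    rw [mul_pow]
    rw [show ((n : ℝ)⁻¹) ^ 2 = (n : ℝ)⁻¹ * (n : ℝ)⁻¹ by ring]
    rw [mul_assoc]
    apply mul_le_mul_of_nonneg_left _ (inv_nonneg.mpr hnpos.le)
    calc (n : ℝ)⁻¹ * (∑ i, ‖u i‖) ^ 2 ≤ (n : ℝ)⁻¹ * ((n : ℝ) * ∑ i, ‖u i‖ ^ 2) :=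
          mul_le_mul_of_nonneg_left hcheb (inv_nonneg.mpr hnpos.le)
      _ = ∑ i, ‖u i‖ ^ 2 := by field_simp
  have hvsq : ‖v‖ ^ 2 ≤ Lsmall ^ 2 * ((n : ℝ)⁻¹ * ∑ i, ‖u i‖ ^ 2) := by
    calc ‖v‖ ^ 2 ≤ (Lsmall * ((n : ℝ)⁻¹ * ∑ i, ‖u i‖)) ^ 2 := by
          have h0 : (0 : ℝ) ≤ ‖v‖ := norm_nonneg _
          nlinarith [hvnorm]
      _ = Lsmall ^ 2 * ((n : ℝ)⁻¹ * ∑ i, ‖u i‖) ^ 2 := by ring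
      _ ≤ Lsmall ^ 2 * ((n : ℝ)⁻¹ * ∑ i, ‖u i‖ ^ 2) :=
          mul_le_mul_of_nonneg_left hsumsq (sq_nonneg _)
  have hAm : ‖A m‖ ≤ ‖A‖ * ‖m‖ := A.le_opNorm m
  have key : ‖A m + v‖ ^ 2 ≤ 2 * ‖A m‖ ^ 2 + 2 * ‖v‖ ^ 2 := by
    have h1 : ‖A m + v‖ ≤ ‖A m‖ + ‖v‖ := norm_add_le _ _
    nlinarith [norm_nonneg (A m + v), norm_nonneg (A m), norm_nonneg v,
      sq_nonneg (‖A m‖ - ‖v‖)]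
  calc ‖A m + v‖ ^ 2 ≤ 2 * ‖A m‖ ^ 2 + 2 * ‖v‖ ^ 2 := key
    _ ≤ 2 * (‖A‖ * ‖m‖) ^ 2 + 2 * (Lsmall ^ 2 * ((n : ℝ)⁻¹ * ∑ i, ‖u i‖ ^ 2)) := by
        gcongr
    _ ≤ 8 * Lsmall ^ 2 * ((n : ℝ)⁻¹ * ∑ i, ‖u i‖ ^ 2)
          + 2 * (‖A‖ + Lsmall) ^ 2 * ‖m‖ ^ 2 := by
        have h1 : ∀ i ∈ Finset.univ, (0:ℝ) ≤ ‖u i‖ ^ 2 := fun i _ => sq_nonneg _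
        have h2 : (0:ℝ) ≤ ∑ i, ‖u i‖ ^ 2 := Finset.sum_nonneg h1
        have h3 : (0:ℝ) ≤ (n : ℝ)⁻¹ * ∑ i, ‖u i‖ ^ 2 :=
          mul_nonneg (inv_nonneg.mpr hnpos.le) h2
        nlinarith [mul_nonneg (sq_nonneg Lsmall) h3,
          mul_nonneg (mul_nonneg hLs A.opNorm_nonneg) (sq_nonneg ‖m‖),
          sq_nonneg (Lsmall * ‖m‖)]
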